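/- Assume 0 < ε ≤ 1/2 and C > 0, and set M = 1 + (4(2 + ε)/ε²)(C + log 8). Let R_1, …, R_d be independent random variables, each distributed according to the geometric distribution Geom(1/2) on the nonnegative integers, and define T_i = |{j ∈ {1,…,d} : R_j ≥ i and j ≥ 2}|. Let ℓ be an integer such that M·2^{ℓ−1} ≤ d < M·2^{ℓ}. Then for every nonnegative integer k with k ≤ ℓ + 1, P(|T_k − 2^{−k}(d − 1)| > ε·2^{−k}(d − 1)) < (1/4)·e^{−C}. -/

import Mathlib

open MeasureTheory ProbabilityTheory

/-- `Scnt R i` is the number of indices `j` with `R j ≥ i` (an integer index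
`i ≤ 0` is satisfied by every entry). -/
def Scnt {d : ℕ} (R : Fin d → ℕ) (i : ℤ) : ℕ :=
  (Finset.univ.filter fun j : Fin d => i ≤ (R j : ℤ)).card

/-- `Tcnt R i` is the number of indices `j` other than the first one with
`R j ≥ i`. -/
def Tcnt {d : ℕ} (R : Fin d → ℕ) (i : ℤ) : ℕ :=
  (Finset.univ.filter fun j : Fin d => i ≤ (R j : ℤ) ∧ 0 < (j : ℕ)).card

section AuxLemmas
open Real

private lemma hd1 {u : ℝ} (hu : 0 < 1 + u) :
    HasDerivAt (fun x : ℝ => (1+x)/2 - 1/(2*(1+x)) - Real.log (1+x))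
      (u^2/(2*(1+u)^2)) u := by
  have h1 : HasDerivAt (fun x : ℝ => 1 + x) 1 u := by
    simpa using (hasDerivAt_id u).const_add 1
  have h2 : HasDerivAt (fun x : ℝ => (1+x)/2) (1/2) u := h1.div_const 2
  have h3 : HasDerivAt (fun x : ℝ => 2*(1+x)) 2 u := by simpa using h1.const_mul 2
  have h4 : HasDerivAt (fun x : ℝ => 1/(2*(1+x))) (-(2/(2*(1+u))^2)) u := by
    simp only [one_div]; exact (h3.inv (by positivity)).congr_deriv (by rw [neg_div])
  have h5 : HasDerivAt (fun x : ℝ => Real.log (1+x)) (1/(1+u)) u := by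
    simpa [one_div] using h1.log hu.ne'
  refine ((h2.sub h4).sub h5).congr_deriv ?_
  field_simp
  ring

lemma log_le_aux {u : ℝ} (hu : 0 ≤ u) : Real.log (1+u) ≤ u*(2+u)/(2*(1+u)) := by
  set f : ℝ → ℝ := fun x => (1+x)/2 - 1/(2*(1+x)) - Real.log (1+x) with hf
  have key : ∀ x : ℝ, 0 ≤ x → HasDerivAt f (x^2/(2*(1+x)^2)) x :=
    fun x hx => hd1 (by linarith)
  have hmono : MonotoneOn f (Set.Ici (0:ℝ)) := by
    refine monotoneOn_of_deriv_nonneg (convex_Ici 0) ?_ ?_ ?_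
    · exact fun x hx => ((key x hx).continuousAt).continuousWithinAt
    · intro x hx
      rw [interior_Ici] at hx
      exact ((key x hx.le).differentiableAt).differentiableWithinAt
    · intro x hx
      rw [interior_Ici] at hx
      rw [(key x hx.le).deriv]
      positivity
  have h0 : f 0 = 0 := by norm_num [hf]
  have := hmono (Set.self_mem_Ici) (Set.mem_Ici.2 hu) hu
  rw [h0] at this
  have h1u : (0:ℝ) < 1 + u := by linarith
  have heq : (1+u)/2 - 1/(2*(1+u)) = u*(2+u)/(2*(1+u)) := by
    field_simp; ring
  simp only [hf] at this
  linarith [this, heq.symm ▸ this]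

private lemma hd2 {x : ℝ} (hx : 0 < 1 + x) :
    HasDerivAt (fun y : ℝ => Real.log (1+y) + 1/(4*(1+y)) + 27/(4*(3+y)) - 5/2)
      (x^3/((1+x)^2*(3+x)^2)) x := by
  have h3x : (0:ℝ) < 3 + x := by linarith
  have h1 : HasDerivAt (fun y : ℝ => 1 + y) 1 x := by
    simpa using (hasDerivAt_id x).const_add 1
  have h1' : HasDerivAt (fun y : ℝ => 3 + y) 1 x := by
    simpa using (hasDerivAt_id x).const_add 3
  have h5 : HasDerivAt (fun y : ℝ => Real.log (1+y)) (1/(1+x)) x := by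
    simpa [one_div] using h1.log hx.ne'
  have h3 : HasDerivAt (fun y : ℝ => 4*(1+y)) 4 x := by simpa using h1.const_mul 4
  have h3' : HasDerivAt (fun y : ℝ => 4*(3+y)) 4 x := by simpa using h1'.const_mul 4
  have h4 : HasDerivAt (fun y : ℝ => 1/(4*(1+y))) (-(4/(4*(1+x))^2)) x := by
    simp only [one_div]; exact (h3.inv (by positivity)).congr_deriv (by rw [neg_div])
  have h4' : HasDerivAt (fun y : ℝ => 27/(4*(3+y))) (27*(-(4/(4*(3+x))^2))) x := by
    have := (h3'.inv (by positivity)).const_mul 27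
    simpa [one_div, neg_div, div_eq_mul_inv, mul_comm] using this
  have := ((h5.add h4).add h4').sub_const (5/2)
  refine this.congr_deriv ?_
  field_simp
  ring

lemma log_ge_aux {x : ℝ} (hx : 0 ≤ x) :
    x*(6+5*x)/(2*(1+x)*(3+x)) ≤ Real.log (1+x) := by
  set f : ℝ → ℝ := fun y => Real.log (1+y) + 1/(4*(1+y)) + 27/(4*(3+y)) - 5/2 with hf
  have key : ∀ y : ℝ, 0 ≤ y → HasDerivAt f (y^3/((1+y)^2*(3+y)^2)) y :=
    fun y hy => hd2 (by linarith)
  have hmono : MonotoneOn f (Set.Ici (0:ℝ)) := by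
    refine monotoneOn_of_deriv_nonneg (convex_Ici 0) ?_ ?_ ?_
    · exact fun y hy => ((key y hy).continuousAt).continuousWithinAt
    · intro y hy
      rw [interior_Ici] at hy
      exact ((key y hy.le).differentiableAt).differentiableWithinAt
    · intro y hy
      rw [interior_Ici] at hy
      have hy' : 0 < y := hy
      rw [(key y hy'.le).deriv]
      have : (0:ℝ) < 1 + y := by linarith
      have : (0:ℝ) < 3 + y := by linarith
      exact div_nonneg (pow_nonneg hy'.le 3) (by positivity)
  have h0 : f 0 = 0 := by norm_num [hf]
  have hle := hmono (Set.self_mem_Ici) (Set.mem_Ici.2 hx) hx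
  rw [h0] at hle
  have h1x : (0:ℝ) < 1 + x := by linarith
  have h3x : (0:ℝ) < 3 + x := by linarith
  have heq : x*(6+5*x)/(2*(1+x)*(3+x)) = 5/2 - 1/(4*(1+x)) - 27/(4*(3+x)) := by
    field_simp; ring
  simp only [hf] at hle
  linarith

lemma upper_exponent {e : ℝ} (he : 0 ≤ e) :
    3*e^2/(6+2*e) ≤ (1+e) * Real.log (1+e) - e := by
  have h := log_ge_aux he
  have h1 : (0:ℝ) < 1 + e := by linarith
  have h3 : (0:ℝ) < 3 + e := by linarith
  have h2 : e*(6+5*e)/(2*(1+e)*(3+e)) * (1+e) = e*(6+5*e)/(2*(3+e)) := by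
    field_simp
  have := mul_le_mul_of_nonneg_right h h1.le
  rw [h2] at this
  have heq : e*(6+5*e)/(2*(3+e)) - e = 3*e^2/(6+2*e) := by
    field_simp; ring
  linarith

lemma lower_exponent {e : ℝ} (he : 0 ≤ e) (he' : e < 1) :
    e^2/2 ≤ e + (1-e) * Real.log (1-e) := by
  have h1e : (0:ℝ) < 1 - e := by linarith
  set u : ℝ := e/(1-e) with hu
  have hu0 : 0 ≤ u := by positivity
  have h := log_le_aux hu0
  have h1u : 1 + u = (1-e)⁻¹ := by
    rw [hu]; field_simp; ring
  have hlog : Real.log (1+u) = -Real.log (1-e) := by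
    rw [h1u, Real.log_inv]
  have hval : u*(2+u)/(2*(1+u)) = e*(2-e)/(2*(1-e)) := by
    rw [h1u, hu]; field_simp; ring
  rw [hlog, hval] at h
  -- -log(1-e) ≤ e(2-e)/(2(1-e)); multiply by (1-e)
  have := mul_le_mul_of_nonneg_right h h1e.le
  have heq : e*(2-e)/(2*(1-e)) * (1-e) = e*(2-e)/2 := by field_simp
  rw [heq] at this
  nlinarith [this]

lemma geom_tail {Ω : Type*} [MeasureSpace Ω] [IsProbabilityMeasure (ℙ : Measure Ω)]
    (X : Ω → ℕ) (hX : Measurable X)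
    (h : ∀ i : ℕ, ℙ {ω | X ω = i} = (2 : ENNReal)⁻¹ ^ (i + 1)) (k : ℕ) :
    ℙ {ω | k ≤ X ω} = (2 : ENNReal)⁻¹ ^ k := by
  have hset : {ω | k ≤ X ω} = ⋃ i : ℕ, {ω | X ω = k + i} := by
    ext ω
    simp only [Set.mem_setOf_eq, Set.mem_iUnion]
    constructor
    · intro hle; exact ⟨X ω - k, by omega⟩
    · rintro ⟨i, hi⟩; omega
  have hdisj : Pairwise (Function.onFun Disjoint fun i : ℕ => {ω | X ω = k + i}) := by
    intro i j hij
    simp only [Function.onFun, Set.disjoint_left]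
    intro ω h1 h2
    simp only [Set.mem_setOf_eq] at h1 h2
    omega
  have hmeasb : ∀ i : ℕ, MeasurableSet {ω | X ω = k + i} :=
    fun i => hX (measurableSet_singleton (k + i))
  rw [hset, measure_iUnion hdisj hmeasb]
  simp_rw [h]
  have : ∀ i : ℕ, (2 : ENNReal)⁻¹ ^ (k + i + 1) = (2 : ENNReal)⁻¹ ^ (k+1) * 2⁻¹ ^ i := by
    intro i; rw [← pow_add]; ring_nf
  simp_rw [this]
  rw [ENNReal.tsum_mul_left, ENNReal.tsum_geometric]
  have h2 : (1 - (2 : ENNReal)⁻¹) = 2⁻¹ := by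
    rw [ENNReal.one_sub_inv_two]
  rw [h2, pow_succ, mul_assoc, ENNReal.mul_inv_cancel (by norm_num) (by norm_num), mul_one]

section
variable {Ω : Type*} [MeasureSpace Ω] [IsProbabilityMeasure (ℙ : Measure Ω)]
  {ι : Type*} {s : Finset ι} {Y : ι → Ω → ℝ} {p : ℝ}

lemma chernoff_both
    (hmeasY : ∀ j, Measurable (Y j))
    (hindepY : iIndepFun Y ℙ)
    (hintY : ∀ j t, Integrable (fun ω => Real.exp (t * Y j ω)) ℙ)
    (hmgfY : ∀ j, ∀ t : ℝ, mgf (Y j) ℙ t = 1 + p * (Real.exp t - 1))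
    (hp0 : 0 ≤ p) (hp1 : p ≤ 1)
    {e : ℝ} (he : 0 < e) (he' : e ≤ 1/2) :
    (ℙ {ω | (1+e) * (p * s.card) ≤ (∑ j ∈ s, Y j) ω}).toReal ≤
        Real.exp (-(3*e^2/(6+2*e)) * (p * s.card)) ∧
    (ℙ {ω | (∑ j ∈ s, Y j) ω ≤ (1-e) * (p * s.card)}).toReal ≤
        Real.exp (-(e^2/2) * (p * s.card)) := by
  set n : ℕ := s.card with hn
  set μ₀ : ℝ := p * n with hμ₀
  have hμ₀nn : 0 ≤ μ₀ := by positivity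
  have hmgf_sum : ∀ t : ℝ, mgf (∑ j ∈ s, Y j) ℙ t = (1 + p * (Real.exp t - 1)) ^ n := by
    intro t
    rw [hindepY.mgf_sum hmeasY s, Finset.prod_congr rfl (fun j _ => hmgfY j t),
      Finset.prod_const]
  have hintT : ∀ t : ℝ, Integrable (fun ω => Real.exp (t * (∑ j ∈ s, Y j) ω)) ℙ :=
    fun t => hindepY.integrable_exp_mul_sum hmeasY (fun j _ => hintY j t)
  have hpowle : ∀ x : ℝ, 0 ≤ 1 + p * x → (1 + p * x) ^ n ≤ Real.exp (n * (p * x)) := by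
    intro x h1
    have h2 : 1 + p * x ≤ Real.exp (p * x) := by
      have := Real.add_one_le_exp (p * x); linarith
    calc (1 + p * x) ^ n ≤ Real.exp (p * x) ^ n := pow_le_pow_left₀ h1 h2 n
      _ = Real.exp (n * (p * x)) := by rw [← Real.exp_nat_mul]
  constructor
  · -- upper tail
    have ht : 0 ≤ Real.log (1 + e) := Real.log_nonneg (by linarith)
    have h := measure_ge_le_exp_mul_mgf (X := ∑ j ∈ s, Y j) (μ := ℙ)
      ((1+e) * μ₀) ht (hintT _)
    rw [hmgf_sum, Real.exp_log (by linarith : (0:ℝ) < 1 + e)] at h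
    have h2 : (1 + p * (1 + e - 1)) ^ n ≤ Real.exp (n * (p * e)) := by
      have := hpowle (1 + e - 1) (by nlinarith)
      simpa using this
    calc (ℙ {ω | (1+e) * μ₀ ≤ (∑ j ∈ s, Y j) ω}).toReal
        ≤ Real.exp (-Real.log (1+e) * ((1+e) * μ₀)) * (1 + p * (1 + e - 1)) ^ n := h
      _ ≤ Real.exp (-Real.log (1+e) * ((1+e) * μ₀)) * Real.exp (n * (p * e)) := by
          exact mul_le_mul_of_nonneg_left h2 (Real.exp_pos _).le
      _ = Real.exp (μ₀ * (e - (1+e) * Real.log (1+e))) := by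
          rw [← Real.exp_add]; congr 1; rw [hμ₀]; ring
      _ ≤ Real.exp (-(3*e^2/(6+2*e)) * μ₀) := by
          apply Real.exp_le_exp.2
          have := upper_exponent he.le
          nlinarith [hμ₀nn]
  · -- lower tail
    have ht : Real.log (1 - e) ≤ 0 := Real.log_nonpos (by linarith) (by linarith)
    have h := measure_le_le_exp_mul_mgf (X := ∑ j ∈ s, Y j) (μ := ℙ)
      ((1-e) * μ₀) ht (hintT _)
    rw [hmgf_sum, Real.exp_log (by linarith : (0:ℝ) < 1 - e)] at h
    have h2 : (1 + p * (1 - e - 1)) ^ n ≤ Real.exp (n * (p * (-e))) := by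
      have := hpowle (1 - e - 1) (by nlinarith)
      convert this using 3 <;> ring
    calc (ℙ {ω | (∑ j ∈ s, Y j) ω ≤ (1-e) * μ₀}).toReal
        ≤ Real.exp (-Real.log (1-e) * ((1-e) * μ₀)) * (1 + p * (1 - e - 1)) ^ n := h
      _ ≤ Real.exp (-Real.log (1-e) * ((1-e) * μ₀)) * Real.exp (n * (p * (-e))) := by
          exact mul_le_mul_of_nonneg_left h2 (Real.exp_pos _).le
      _ = Real.exp (μ₀ * (-e - (1-e) * Real.log (1-e))) := by
          rw [← Real.exp_add]; congr 1; rw [hμ₀]; ring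
      _ ≤ Real.exp (-(e^2/2) * μ₀) := by
          apply Real.exp_le_exp.2
          have := lower_exponent he.le (by linarith)
          nlinarith [hμ₀nn]
end

lemma exp_arith (ε C L Mv μ : ℝ) (hε : 0 < ε) (hε' : ε ≤ 1/2)
    (hCL : 2.07 ≤ C + L) (hkey : ε^2*(Mv-1) = 4*(2+ε)*(C+L)) (hμ : (Mv-2)/4 ≤ μ) :
    (C + L + ε/5) * (6+2*ε) ≤ 3*ε^2*μ ∧ C + L + ε/5 ≤ ε^2/2 * μ := by
  have h6 : (2+ε)*(C+L) - ε^2/4 ≤ ε^2 * μ := by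
    have := mul_le_mul_of_nonneg_left hμ (sq_nonneg ε)
    nlinarith [this, hkey]
  have hp1 : 0 ≤ (C + L - 2.07) * ε := mul_nonneg (by linarith) hε.le
  have hp2 : 0 ≤ (1/2 - ε) * ε := mul_nonneg (by linarith) hε.le
  constructor
  · nlinarith [h6, hp1, hp2]
  · nlinarith [h6, hp1, hp2]

end AuxLemmas

theorem Tcount_tail_bound {Ω : Type*} [MeasureSpace Ω]
    [IsProbabilityMeasure (ℙ : Measure Ω)]
    (ε C : ℝ) (hε : 0 < ε) (hε' : ε ≤ 1 / 2) (hC : 0 < C)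
    (M : ℝ) (hM : M = 1 + 4 * (2 + ε) / ε ^ 2 * (C + Real.log 8))
    (d : ℕ) (R : Fin d → Ω → ℕ)
    (hmeas : ∀ j, Measurable (R j))
    (hindep : iIndepFun R ℙ)
    (hgeom : ∀ j (i : ℕ), ℙ {ω | R j ω = i} = (2 : ENNReal)⁻¹ ^ (i + 1))
    (ℓ : ℤ) 
    (hℓ₁ : M * 2 ^ (ℓ - 1) ≤ (d : ℝ)) (hℓ₂ : (d : ℝ) < M * 2 ^ ℓ) (k : ℕ) (hk : (k : ℤ) ≤ ℓ + 1) :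
    ℙ {ω | ε * (2 ^ (-(k : ℤ)) * ((d : ℝ) - 1)) <
        |(Tcnt (fun j => R j ω) (k : ℤ) : ℝ) - 2 ^ (-(k : ℤ)) * ((d : ℝ) - 1)|} <
      ENNReal.ofReal (1 / 4 * Real.exp (-C)) := by
  classical
  set L : ℝ := Real.log 8 with hLdef
  have hL : (2.07 : ℝ) ≤ L := by
    have h8 : (8:ℝ) = 2 ^ (3:ℕ) := by norm_num
    have := Real.log_two_gt_d9
    rw [hLdef, h8, Real.log_pow]
    push_cast
    nlinarith
  have hRHSpos : (0:ℝ) < 1 / 4 * Real.exp (-C) := by positivity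
  -- basic size facts
  have hε2 : ε ^ 2 ≤ 1/4 := by nlinarith
  have hQ : 4 * (2 + ε) / ε ^ 2 * ε ^ 2 = 4 * (2 + ε) := by
    field_simp
  have hQ32 : (32:ℝ) ≤ 4 * (2 + ε) / ε ^ 2 := by
    have hQ0 : 0 ≤ 4 * (2 + ε) / ε ^ 2 := by positivity
    nlinarith [hQ, hε2]
  have hCL : (2.07:ℝ) ≤ C + L := by linarith
  have hM65 : (65:ℝ) ≤ M := by nlinarith [hQ32, hCL]
  have hkey : ε ^ 2 * (M - 1) = 4 * (2 + ε) * (C + L) := by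
    rw [hM]; field_simp; ring
  -- ℓ ≥ -1 and d large
  have hl1 : (-1:ℤ) ≤ ℓ := by omega
  have hd17 : (16:ℝ) ≤ (d:ℝ) := by
    have h2l : (2:ℝ) ^ ((-2:ℤ)) ≤ (2:ℝ) ^ (ℓ - 1) := by
      apply zpow_le_zpow_right₀ (by norm_num) (by omega)
    have : M * 2 ^ ((-2:ℤ)) ≤ M * 2 ^ (ℓ-1) :=
      mul_le_mul_of_nonneg_left h2l (by linarith)
    have h4 : (2:ℝ) ^ ((-2:ℤ)) = 1/4 := by norm_num
    rw [h4] at this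
    linarith
  have hd1 : 1 ≤ d := by
    have h1 : (1:ℝ) ≤ (d:ℝ) := by linarith
    exact_mod_cast h1
  have hNe : NeZero d := ⟨by omega⟩
  -- the index set and its cardinality
  set sfin : Finset (Fin d) := Finset.univ.filter (fun j : Fin d => 0 < (j:ℕ)) with hsfin
  have hcard : (sfin.card : ℝ) = (d:ℝ) - 1 := by
    have h0 : (Finset.univ.filter (fun j : Fin d => ¬ 0 < (j:ℕ))) = {(0 : Fin d)} := by
      ext j
      simp only [Finset.mem_filter, Finset.mem_univ, true_and, Finset.mem_singleton, Fin.ext_iff, Fin.val_zero]; omega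
    have h1 := Finset.card_filter_add_card_filter_not
      (s := (Finset.univ : Finset (Fin d))) (p := fun j : Fin d => 0 < (j:ℕ))
    rw [h0, ← hsfin] at h1
    simp only [Finset.card_singleton, Finset.card_univ, Fintype.card_fin] at h1
    have : sfin.card = d - 1 := by omega
    rw [this]
    push_cast [Nat.cast_sub hd1]
    ring
  by_cases hk0 : k = 0
  · -- trivial case: T = d - 1 deterministically
    subst hk0
    have hempty : {ω : Ω | ε * ((2:ℝ) ^ (-(0:ℕ) : ℤ) * ((d : ℝ) - 1)) <
        |(Tcnt (fun j => R j ω) ((0:ℕ) : ℤ) : ℝ) - 2 ^ (-(0:ℕ) : ℤ) * ((d : ℝ) - 1)|} = ∅ := by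
      ext ω
      simp only [Set.mem_setOf_eq, Set.mem_empty_iff_false, iff_false, not_lt]
      have hT : Tcnt (fun j => R j ω) ((0:ℕ) : ℤ) = sfin.card := by
        unfold Tcnt
        congr 1
        ext j
        simp [hsfin]
      rw [hT]
      simp only [Nat.cast_zero, neg_zero, zpow_zero, one_mul]
      rw [hcard, sub_self, abs_zero]
      have h1 : (1:ℝ) ≤ (d:ℝ) := by linarith
      exact mul_nonneg hε.le (by linarith)
    rw [hempty, measure_empty]
    exact ENNReal.ofReal_pos.2 hRHSpos
  · -- main case: k ≥ 1
    have hk1 : 1 ≤ k := Nat.one_le_iff_ne_zero.2 hk0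
    have hl0 : (0:ℤ) ≤ ℓ := by omega
    set pR : ℝ := (2:ℝ) ^ (-(k:ℤ)) with hpR
    have hpR0 : 0 < pR := by positivity
    have hpR1 : pR ≤ 1 := by
      calc pR ≤ (2:ℝ) ^ (0:ℤ) := zpow_le_zpow_right₀ one_le_two (by omega)
        _ = 1 := zpow_zero 2
    set A : Fin d → Set Ω := fun j => {ω | k ≤ R j ω} with hA
    have hAmeas : ∀ j, MeasurableSet (A j) := fun j => (hmeas j) measurableSet_Ici
    have hPA : ∀ j, ℙ (A j) = (2:ENNReal)⁻¹ ^ k :=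
      fun j => geom_tail (R j) (hmeas j) (hgeom j) k
    have hpR' : pR = ((2:ℝ)⁻¹) ^ k := by
      rw [hpR, zpow_neg, zpow_natCast, inv_pow]
    have hPAtoReal : ∀ j, (ℙ (A j)).toReal = pR := by
      intro j
      rw [hPA j, hpR']
      simp [ENNReal.toReal_pow, ENNReal.toReal_inv]
    set Y : Fin d → Ω → ℝ := fun j ω => if k ≤ R j ω then 1 else 0 with hY
    have hYmeas : ∀ j, Measurable (Y j) :=
      fun j => Measurable.ite (hAmeas j) measurable_const measurable_const
    have hYindep : iIndepFun Y ℙ := by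
      exact hindep.comp (fun _ (m : ℕ) => if k ≤ m then (1:ℝ) else 0)
        (fun _ => measurable_from_nat)
    have hrepr : ∀ j (t : ℝ), (fun ω => Real.exp (t * Y j ω)) =
        fun ω => (A j).indicator (fun _ => Real.exp t - 1) ω + 1 := by
      intro j t
      funext ω
      by_cases h : k ≤ R j ω
      · simp [hY, hA, Set.indicator_apply, Set.mem_setOf_eq, h, mul_one]
      · simp [hY, hA, Set.indicator_apply, Set.mem_setOf_eq, h, mul_zero, Real.exp_zero]
    have hYint : ∀ j (t : ℝ), Integrable (fun ω => Real.exp (t * Y j ω)) ℙ := by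
      intro j t
      rw [hrepr j t]
      exact ((integrable_const (Real.exp t - 1)).indicator (hAmeas j)).add (integrable_const 1)
    have hYmgf : ∀ j, ∀ t : ℝ, mgf (Y j) ℙ t = 1 + pR * (Real.exp t - 1) := by
      intro j t
      have : mgf (Y j) ℙ t = ∫ ω, Real.exp (t * Y j ω) ∂ℙ := rfl
      rw [this, hrepr j t, integral_add
        (((integrable_const (Real.exp t - 1)).indicator (hAmeas j))) (integrable_const 1),
        integral_indicator_const _ (hAmeas j), integral_const]
      simp [measureReal_def, hPAtoReal j, smul_eq_mul]
      ring
    have hchernoff := chernoff_both (s := sfin) hYmeas hYindep hYint hYmgf hpR0.le hpR1 hε hε'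
    set μ₀ : ℝ := pR * (sfin.card : ℝ) with hμ₀def
    have hμeq : (2:ℝ) ^ (-(k:ℤ)) * ((d:ℝ) - 1) = μ₀ := by
      rw [hμ₀def, hcard, hpR]
    have hsum : ∀ ω, ((Tcnt (fun j => R j ω) (k:ℤ) : ℕ) : ℝ) = (∑ j ∈ sfin, Y j) ω := by
      intro ω
      have h1 : (∑ j ∈ sfin, Y j) ω = ∑ j ∈ sfin, (if k ≤ R j ω then (1:ℝ) else 0) := by
        simp [hY]
      rw [h1, Finset.sum_boole]
      unfold Tcnt
      have hceq : (Finset.univ.filter fun j : Fin d =>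
          (k:ℤ) ≤ ((R j ω : ℕ):ℤ) ∧ 0 < (j:ℕ)) = sfin.filter (fun j => k ≤ R j ω) := by
        rw [hsfin, Finset.filter_filter]
        apply Finset.filter_congr
        intro j _
        simp only [Nat.cast_le, eq_iff_iff]
        constructor
        · rintro ⟨h1, h2⟩; exact ⟨h2, by exact_mod_cast h1⟩
        · rintro ⟨h1, h2⟩; exact ⟨by exact_mod_cast h2, h1⟩
      rw [hceq]
    -- inclusion into the two tails
    set U : Set Ω := {ω | (1+ε) * (pR * (sfin.card:ℝ)) ≤ (∑ j ∈ sfin, Y j) ω} with hU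
    set Lo : Set Ω := {ω | (∑ j ∈ sfin, Y j) ω ≤ (1-ε) * (pR * (sfin.card:ℝ))} with hLo
    have hEsub : {ω : Ω | ε * ((2:ℝ) ^ (-(k : ℤ)) * ((d : ℝ) - 1)) <
        |(Tcnt (fun j => R j ω) (k : ℤ) : ℝ) - 2 ^ (-(k : ℤ)) * ((d : ℝ) - 1)|} ⊆ U ∪ Lo := by
      intro ω hω
      simp only [Set.mem_setOf_eq] at hω
      rw [hsum ω, hμeq] at hω
      rcases lt_abs.1 hω with h | h
      · left
        simp only [hU, Set.mem_setOf_eq, ← hμ₀def]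
        linarith
      · right
        simp only [hLo, Set.mem_setOf_eq, ← hμ₀def]
        linarith
    -- bound on μ₀
    have hple : (2:ℝ)^(-(ℓ+1)) ≤ pR := by
      rw [hpR]; exact zpow_le_zpow_right₀ one_le_two (by omega)
    have hn0 : (0:ℝ) ≤ (sfin.card:ℝ) := Nat.cast_nonneg _
    have h1 : (2:ℝ)^(-(ℓ+1)) * (sfin.card:ℝ) ≤ μ₀ := by
      rw [hμ₀def]; exact mul_le_mul_of_nonneg_right hple hn0
    have h2 : (2:ℝ)^(-(ℓ+1)) * (M * 2^(ℓ-1) - 1) ≤ (2:ℝ)^(-(ℓ+1)) * (sfin.card:ℝ) := by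
      apply mul_le_mul_of_nonneg_left _ (by positivity)
      rw [hcard]; linarith
    have h3 : (2:ℝ)^(-(ℓ+1)) * (M * 2^(ℓ-1) - 1) = M * (2:ℝ)^((-2:ℤ)) - 2^(-(ℓ+1)) := by
      have hz : (2:ℝ)^(-(ℓ+1)) * (2:ℝ)^(ℓ-1) = (2:ℝ)^((-2:ℤ)) := by
        rw [← zpow_add₀ (by norm_num : (2:ℝ) ≠ 0)]
        congr 1
        ring
      rw [mul_sub, mul_one, ← hz]
      ring
    have h4 : (2:ℝ)^(-(ℓ+1)) ≤ 1/2 := by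
      calc (2:ℝ)^(-(ℓ+1)) ≤ (2:ℝ)^((-1:ℤ)) := zpow_le_zpow_right₀ one_le_two (by omega)
        _ = 1/2 := by norm_num
    have h5 : (2:ℝ)^((-2:ℤ)) = 1/4 := by norm_num
    have hμ₀ : (M-2)/4 ≤ μ₀ := by
      rw [h5] at h3
      linarith
    -- exponent bounds
    have harith := exp_arith ε C L M μ₀ hε hε' hCL hkey hμ₀
    have hexp1 : C + L + ε/5 ≤ 3*ε^2/(6+2*ε) * μ₀ := by
      rw [div_mul_eq_mul_div, le_div_iff₀ (by linarith : (0:ℝ) < 6+2*ε)]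
      linarith [harith.1]
    have hexp2 : C + L + ε/5 ≤ ε^2/2 * μ₀ := harith.2
    have hb1 : (ℙ U).toReal ≤ Real.exp (-(C + L + ε/5)) := by
      refine hchernoff.1.trans ?_
      apply Real.exp_le_exp.2
      linarith [hexp1]
    have hb2 : (ℙ Lo).toReal ≤ Real.exp (-(C + L + ε/5)) := by
      refine hchernoff.2.trans ?_
      apply Real.exp_le_exp.2
      linarith [hexp2]
    have hUb : ℙ U ≤ ENNReal.ofReal (Real.exp (-(C + L + ε/5))) := by
      rw [← ENNReal.ofReal_toReal (measure_ne_top ℙ U)]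
      exact ENNReal.ofReal_le_ofReal hb1
    have hLob : ℙ Lo ≤ ENNReal.ofReal (Real.exp (-(C + L + ε/5))) := by
      rw [← ENNReal.ofReal_toReal (measure_ne_top ℙ Lo)]
      exact ENNReal.ofReal_le_ofReal hb2
    refine lt_of_le_of_lt ((measure_mono hEsub).trans (measure_union_le _ _)) ?_
    refine lt_of_le_of_lt (add_le_add hUb hLob) ?_
    rw [← ENNReal.ofReal_add (Real.exp_pos _).le (Real.exp_pos _).le,
      ENNReal.ofReal_lt_ofReal_iff hRHSpos]
    have h8 : Real.exp (-L) = 1/8 := by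
      rw [Real.exp_neg, hLdef, Real.exp_log (by norm_num : (0:ℝ) < 8)]
      norm_num
    have hsplit : Real.exp (-(C + L + ε/5)) = Real.exp (-C) * (1/8) * Real.exp (-(ε/5)) := by
      rw [show -(C + L + ε/5) = -C + -L + -(ε/5) by ring, Real.exp_add, Real.exp_add, h8]
    rw [hsplit]
    have hlt1 : Real.exp (-(ε/5)) < 1 := by
      rw [Real.exp_lt_one_iff]
      linarith
    have heq : Real.exp (-C) * (1/8) * Real.exp (-(ε/5)) + Real.exp (-C) * (1/8) * Real.exp (-(ε/5))
        = Real.exp (-C) * (Real.exp (-(ε/5)) / 4) := by ring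
    rw [heq, show (1:ℝ)/4 * Real.exp (-C) = Real.exp (-C) * (1/4) by ring]
    exact mul_lt_mul_of_pos_left (by linarith) (Real.exp_pos _)
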